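/- Under the same stationarity assumption, with E[1^a, 0^m] = ∫ z^a (1-z)^m dπ, one has for every n ≥ 0: ((n+2)(n+1+2B+2S) - 2S)·E[1, 0^{n+1}] = (n+1)(n+2Bb₀)·E[1, 0^n] + 2Bb₁·E[0^{n+1}] + (n+2)·2S·E[1, 0^{n+2}]. -/

import Mathlib

open MeasureTheory Real

/-- Mixed moment recursion for a stationary distribution of the Wright-Fisher
diffusion: `((n+2)(n+1+2B+2S) - 2S)·E[1,0^{n+1}] = (n+1)(n+2Bb₀)·E[1,0^n]
+ 2Bb₁·E[0^{n+1}] + (n+2)·2S·E[1,0^{n+2}]`. -/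
theorem WF_moment_recursion_two (B b₀ b₁ S : ℝ) (hB : 0 ≤ B) (hS : 0 ≤ S)
    (hb₀ : 0 ≤ b₀) (hb₁ : 0 ≤ b₁) (hsum : b₀ + b₁ = 1)
    (μ : Measure ℝ) [IsProbabilityMeasure μ] (hsupp : μ (Set.Icc (0 : ℝ) 1)ᶜ = 0)
    (hstat : ∀ f : ℝ → ℝ, ContDiff ℝ 2 f →
      ∫ z, ((B * b₁ * (1 - z) - B * b₀ * z + S * z * (1 - z)) * deriv f z
          + 1 / 2 * (z * (1 - z)) * deriv (deriv f) z) ∂μ = 0)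
    (n : ℕ) :
    (((n : ℝ) + 2) * ((n : ℝ) + 1 + 2 * B + 2 * S) - 2 * S) *
        ∫ z, z * (1 - z) ^ (n + 1) ∂μ
      = ((n : ℝ) + 1) * ((n : ℝ) + 2 * B * b₀) * ∫ z, z * (1 - z) ^ n ∂μ
        + 2 * B * b₁ * ∫ z, (1 - z) ^ (n + 1) ∂μ
        + ((n : ℝ) + 2) * (2 * S) * ∫ z, z * (1 - z) ^ (n + 2) ∂μ := by
  -- a.e. membership in [0,1]
  have hae : ∀ᵐ z ∂μ, z ∈ Set.Icc (0 : ℝ) 1 := by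
    rw [ae_iff]
    exact hsupp
  -- integrability of z^a (1-z)^m
  have hint : ∀ a m : ℕ, Integrable (fun z : ℝ => z ^ a * (1 - z) ^ m) μ := by
    intro a m
    refine Integrable.mono' (integrable_const (1 : ℝ))
      ((continuous_pow a |>.mul ((continuous_const.sub continuous_id).pow m)).aestronglyMeasurable)
      (hae.mono fun z hz => ?_)
    obtain ⟨h0, h1⟩ := hz
    have h0' : 0 ≤ 1 - z := by linarith
    have h1' : 1 - z ≤ 1 := by linarith
    rw [Real.norm_eq_abs, abs_mul, abs_pow, abs_pow, abs_of_nonneg h0, abs_of_nonneg h0']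
    exact mul_le_one₀ (pow_le_one₀ h0 h1) (pow_nonneg h0' m) (pow_le_one₀ h0' h1')
  set f : ℝ → ℝ := fun z => z * (1 - z) ^ (n + 1) with hf_def
  have hcd : ContDiff ℝ 2 f := by
    exact contDiff_id.mul ((contDiff_const.sub contDiff_id).pow (n + 1))
  have h1 : ∀ z : ℝ, HasDerivAt (fun z : ℝ => 1 - z) (-1) z := fun z =>
    (hasDerivAt_id z).const_sub 1
  have hf' : ∀ z : ℝ, HasDerivAt f
      (((n : ℝ) + 2) * (1 - z) ^ (n + 1) - ((n : ℝ) + 1) * (1 - z) ^ n) z := by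
    intro z
    have h3 : HasDerivAt (fun y : ℝ => y * (1 - y) ^ (n + 1))
        (1 * (1 - z) ^ (n + 1) + z * (((n + 1 : ℕ) : ℝ) * (1 - z) ^ (n + 1 - 1) * (-1))) z :=
      (hasDerivAt_id z).mul ((h1 z).pow (n + 1))
    convert h3 using 1
    simp only [Nat.add_sub_cancel, id_eq]
    push_cast
    ring
  have hderiv : deriv f = fun z : ℝ =>
      ((n : ℝ) + 2) * (1 - z) ^ (n + 1) - ((n : ℝ) + 1) * (1 - z) ^ n :=
    funext fun z => (hf' z).deriv
  have hf'' : ∀ z : ℝ, HasDerivAt (fun z : ℝ =>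
      ((n : ℝ) + 2) * (1 - z) ^ (n + 1) - ((n : ℝ) + 1) * (1 - z) ^ n)
      (((n : ℝ) + 2) * (((n : ℝ) + 1) * (1 - z) ^ n * (-1))
        - ((n : ℝ) + 1) * ((n : ℝ) * (1 - z) ^ (n - 1) * (-1))) z := by
    intro z
    have h4 : HasDerivAt (fun y : ℝ =>
        ((n : ℝ) + 2) * (1 - y) ^ (n + 1) - ((n : ℝ) + 1) * (1 - y) ^ n)
        (((n : ℝ) + 2) * (((n + 1 : ℕ) : ℝ) * (1 - z) ^ (n + 1 - 1) * (-1))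
          - ((n : ℝ) + 1) * ((n : ℝ) * (1 - z) ^ (n - 1) * (-1))) z :=
      (((h1 z).pow (n + 1)).const_mul ((n : ℝ) + 2)).sub
      (((h1 z).pow n).const_mul ((n : ℝ) + 1))
    convert h4 using 1
    simp only [Nat.add_sub_cancel]
    push_cast
    ring
  have hderiv2 : ∀ z : ℝ, deriv (deriv f) z =
      ((n : ℝ) + 2) * (((n : ℝ) + 1) * (1 - z) ^ n * (-1))
        - ((n : ℝ) + 1) * ((n : ℝ) * (1 - z) ^ (n - 1) * (-1)) := by
    intro z
    rw [hderiv]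
    exact (hf'' z).deriv
  have heq := hstat f hcd
  -- rewrite the integrand pointwise into the moment basis
  have hkey : ∀ z : ℝ,
      (B * b₁ * (1 - z) - B * b₀ * z + S * z * (1 - z)) * deriv f z
          + 1 / 2 * (z * (1 - z)) * deriv (deriv f) z
      = (B * b₀ * ((n : ℝ) + 1) + (n : ℝ) * ((n : ℝ) + 1) / 2) * (z ^ 1 * (1 - z) ^ n)
        - (B * b₁ * ((n : ℝ) + 2) + B * b₀ * ((n : ℝ) + 2) + S * ((n : ℝ) + 1)
            + ((n : ℝ) + 1) * ((n : ℝ) + 2) / 2) * (z ^ 1 * (1 - z) ^ (n + 1))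
        + B * b₁ * (z ^ 0 * (1 - z) ^ (n + 1))
        + S * ((n : ℝ) + 2) * (z ^ 1 * (1 - z) ^ (n + 2)) := by
    intro z
    rw [hderiv2 z]
    simp only [hderiv]
    cases n with
    | zero => push_cast; ring
    | succ m =>
      simp only [Nat.add_sub_cancel]
      push_cast
      ring
  have I1 : Integrable (fun z : ℝ =>
      (B * b₀ * ((n : ℝ) + 1) + (n : ℝ) * ((n : ℝ) + 1) / 2) * (z ^ 1 * (1 - z) ^ n)) μ :=
    (hint 1 n).const_mul _
  have I2 : Integrable (fun z : ℝ =>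
      (B * b₁ * ((n : ℝ) + 2) + B * b₀ * ((n : ℝ) + 2) + S * ((n : ℝ) + 1)
        + ((n : ℝ) + 1) * ((n : ℝ) + 2) / 2) * (z ^ 1 * (1 - z) ^ (n + 1))) μ :=
    (hint 1 (n + 1)).const_mul _
  have I3 : Integrable (fun z : ℝ => B * b₁ * (z ^ 0 * (1 - z) ^ (n + 1))) μ :=
    (hint 0 (n + 1)).const_mul _
  have I4 : Integrable (fun z : ℝ => S * ((n : ℝ) + 2) * (z ^ 1 * (1 - z) ^ (n + 2))) μ :=
    (hint 1 (n + 2)).const_mul _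
  have I12 : Integrable (fun z : ℝ =>
      (B * b₀ * ((n : ℝ) + 1) + (n : ℝ) * ((n : ℝ) + 1) / 2) * (z ^ 1 * (1 - z) ^ n)
        - (B * b₁ * ((n : ℝ) + 2) + B * b₀ * ((n : ℝ) + 2) + S * ((n : ℝ) + 1)
            + ((n : ℝ) + 1) * ((n : ℝ) + 2) / 2) * (z ^ 1 * (1 - z) ^ (n + 1))) μ :=
    I1.sub I2
  have I123 : Integrable (fun z : ℝ =>
      (B * b₀ * ((n : ℝ) + 1) + (n : ℝ) * ((n : ℝ) + 1) / 2) * (z ^ 1 * (1 - z) ^ n)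
        - (B * b₁ * ((n : ℝ) + 2) + B * b₀ * ((n : ℝ) + 2) + S * ((n : ℝ) + 1)
            + ((n : ℝ) + 1) * ((n : ℝ) + 2) / 2) * (z ^ 1 * (1 - z) ^ (n + 1))
        + B * b₁ * (z ^ 0 * (1 - z) ^ (n + 1))) μ :=
    I12.add I3
  rw [show (fun z : ℝ => (B * b₁ * (1 - z) - B * b₀ * z + S * z * (1 - z)) * deriv f z
          + 1 / 2 * (z * (1 - z)) * deriv (deriv f) z) = _ from funext hkey] at heq
  rw [integral_add I123 I4, integral_add I12 I3, integral_sub I1 I2, integral_const_mul,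
    integral_const_mul, integral_const_mul, integral_const_mul] at heq
  simp only [pow_one, pow_zero, one_mul] at heq
  rw [hf_def]
  linear_combination (-2 : ℝ) * heq
    - (2 * B * ((n : ℝ) + 2) * ∫ z, z * (1 - z) ^ (n + 1) ∂μ) * hsum
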